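/- Let 0 < q < 1, 0 < a < b, and f, g : [0,b] → ℝ bounded with m ≤ f ≤ M, φ ≤ g ≤ Φ on [0,b]. Then |(1/(b−a))·I_q(fg;a,b) − (1/(b−a)²)·I_q(f;a,b)·I_q(g;a,b)| ≤ (1/4)(M−m)(Φ−φ)·(1 + 4ab/(b−a)²). -/

import Mathlib

open scoped BigOperators
open Set

private lemma geo_summ {q:ℝ} (h0 : 0 ≤ q) (h1 : q < 1) : Summable fun n : ℕ => q ^ n :=
  summable_geometric_of_lt_one h0 h1

private lemma summ_of_bdd {q:ℝ} (h0 : 0 ≤ q) (h1 : q < 1) (x : ℕ → ℝ) (C : ℝ)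
    (hx : ∀ n, |x n| ≤ C) : Summable fun n => x n * q ^ n := by
  apply Summable.of_norm_bounded (g := fun n => C * q ^ n) ((geo_summ h0 h1).mul_left C)
  intro n
  rw [Real.norm_eq_abs, abs_mul, abs_pow, abs_of_nonneg h0]
  exact mul_le_mul_of_nonneg_right (hx n) (pow_nonneg h0 n)

private lemma abs_tsum_le' (f : ℕ → ℝ) (h : Summable fun n => |f n|) :
    |∑' n, f n| ≤ ∑' n, |f n| := by
  have := norm_tsum_le_tsum_norm (f := f) (by simpa [Real.norm_eq_abs] using h)
  simpa [Real.norm_eq_abs] using this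

private lemma Eabs {q:ℝ} (h0 : 0 ≤ q) (h1 : q < 1) (x : ℕ → ℝ) (C : ℝ)
    (hx : ∀ n, |x n| ≤ C) : |(1-q) * ∑' n, x n * q^n| ≤ C := by
  have hq' : (0:ℝ) < 1 - q := by linarith
  have hz := summ_of_bdd h0 h1 x C hx
  have h2 : |∑' n, x n * q^n| ≤ ∑' n, C * q^n := by
    calc |∑' n, x n * q^n| ≤ ∑' n, |x n * q^n| := abs_tsum_le' _ hz.abs
    _ ≤ ∑' n, C*q^n := Summable.tsum_le_tsum (fun n => by
          rw [abs_mul, abs_pow, abs_of_nonneg h0]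
          exact mul_le_mul_of_nonneg_right (hx n) (pow_nonneg h0 n)) hz.abs
          ((geo_summ h0 h1).mul_left C)
  have h3 : ∑' n : ℕ, C*q^n = C * (1-q)⁻¹ := by
    rw [tsum_mul_left, tsum_geometric_of_lt_one h0 h1]
  rw [abs_mul, abs_of_nonneg hq'.le]
  calc (1-q)*|∑' n, x n * q^n| ≤ (1-q)*(C*(1-q)⁻¹) := by
        apply mul_le_mul_of_nonneg_left _ hq'.le
        rw [← h3]; exact h2
  _ = C := by field_simp

private lemma coreA {q:ℝ} (h0 : 0 ≤ q) (h1 : q < 1) (x y : ℕ → ℝ) (s t : ℝ)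
    (hx : ∀ n, |x n| ≤ s) (hy : ∀ n, |y n| ≤ t) :
    s * |(1-q) * ∑' n, (x n * y n) * q^n -
        ((1-q) * ∑' n, x n * q^n) * ((1-q) * ∑' n, y n * q^n)|
      ≤ t * (s^2 - ((1-q) * ∑' n, x n * q^n)^2) := by
  have hq' : (0:ℝ) < 1 - q := by linarith
  have hs0 : 0 ≤ s := le_trans (abs_nonneg _) (hx 0)
  have ht0 : 0 ≤ t := le_trans (abs_nonneg _) (hy 0)
  set p : ℝ := (1-q) * ∑' n, x n * q^n with hpdef
  have hp : |p| ≤ s := Eabs h0 h1 x s hx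
  have hps : -s ≤ p ∧ p ≤ s := abs_le.mp hp
  have hsx := summ_of_bdd h0 h1 x s hx
  have hsy := summ_of_bdd h0 h1 y t hy
  have hsxy : Summable fun n => (x n * y n) * q^n :=
    summ_of_bdd h0 h1 _ (s*t) (fun n => by
      rw [abs_mul]; exact mul_le_mul (hx n) (hy n) (abs_nonneg _) hs0)
  have hz : Summable fun n => (s * (x n - p) * y n) * q^n :=
    summ_of_bdd h0 h1 _ (s * (s + |p|) * t) (fun n => by
      rw [abs_mul, abs_mul, abs_of_nonneg hs0]
      have h1' : |x n - p| ≤ s + |p| := le_trans (abs_sub _ _) (by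
        exact add_le_add (hx n) le_rfl)
      have := mul_le_mul h1' (hy n) (abs_nonneg _) (by positivity)
      nlinarith [this, abs_nonneg (y n)])
  have hpt : ∀ n, |(s * (x n - p) * y n) * q^n| ≤ (t * (s^2 - p * x n)) * q^n := by
    intro n
    rw [abs_mul, abs_pow, abs_of_nonneg h0]
    apply mul_le_mul_of_nonneg_right _ (pow_nonneg h0 n)
    rw [abs_mul, abs_mul, abs_of_nonneg hs0]
    have hxs := abs_le.mp (hx n)
    have key : s * |x n - p| ≤ s^2 - p * x n := by
      rcases abs_cases (x n - p) with ⟨h, _⟩ | ⟨h, _⟩ <;> rw [h] <;>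
        nlinarith [hps.1, hps.2, hxs.1, hxs.2]
    calc s * |x n - p| * |y n| ≤ (s^2 - p * x n) * t := by
          apply mul_le_mul key (hy n) (abs_nonneg _)
          nlinarith [abs_nonneg (x n - p), mul_nonneg hs0 (abs_nonneg (x n - p))]
    _ = t * (s^2 - p * x n) := by ring
  have hb : Summable fun n => (t * (s^2 - p * x n)) * q^n := by
    have : (fun n => (t * (s^2 - p * x n)) * q^n)
        = fun n => (t * s^2) * q^n - (t * p) * (x n * q^n) := by
      funext n; ring
    rw [this]
    exact ((geo_summ h0 h1).mul_left _).sub (hsx.mul_left _)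
  have hid : s * ((1-q) * ∑' n, (x n * y n) * q^n - p * ((1-q) * ∑' n, y n * q^n))
      = (1-q) * ∑' n, (s * (x n - p) * y n) * q^n := by
    have e1 : ∀ n, (s * (x n - p) * y n) * q^n
        = s * ((x n * y n) * q^n) - (s * p) * (y n * q^n) := by intro n; ring
    rw [tsum_congr e1, Summable.tsum_sub (hsxy.mul_left s) (hsy.mul_left (s*p)),
      tsum_mul_left, tsum_mul_left]
    ring
  have hbsum : (1-q) * ∑' n, (t * (s^2 - p * x n)) * q^n = t * (s^2 - p^2) := by
    have e1 : ∀ n, (t * (s^2 - p * x n)) * q^n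
        = (t * s^2) * q^n - (t * p) * (x n * q^n) := by intro n; ring
    rw [tsum_congr e1, Summable.tsum_sub ((geo_summ h0 h1).mul_left _) (hsx.mul_left _),
      tsum_mul_left, tsum_mul_left, tsum_geometric_of_lt_one h0 h1]
    field_simp [hpdef]
    ring
  calc s * |(1-q) * ∑' n, (x n * y n) * q^n - p * ((1-q) * ∑' n, y n * q^n)|
      = |s * ((1-q) * ∑' n, (x n * y n) * q^n - p * ((1-q) * ∑' n, y n * q^n))| := by
        rw [abs_mul, abs_of_nonneg hs0]
    _ = |(1-q) * ∑' n, (s * (x n - p) * y n) * q^n| := by rw [hid]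
    _ ≤ (1-q) * ∑' n, (t * (s^2 - p * x n)) * q^n := by
        rw [abs_mul, abs_of_nonneg hq'.le]
        apply mul_le_mul_of_nonneg_left _ hq'.le
        calc |∑' n, (s * (x n - p) * y n) * q^n|
            ≤ ∑' n, |(s * (x n - p) * y n) * q^n| := abs_tsum_le' _ hz.abs
        _ ≤ ∑' n, (t * (s^2 - p * x n)) * q^n := Summable.tsum_le_tsum hpt hz.abs hb
    _ = t * (s^2 - p^2) := hbsum

private lemma scalar_ineq (A s x y : ℝ) (hA : 0 < A) (hx0 : 0 ≤ x) (hxs : x ≤ s)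
    (hy0 : 0 ≤ y) (hys : y ≤ s) :
    (A+1)*(s^2-x^2) + A*(s^2-y^2) + 2*A*(A+1)*s*(x+y) ≤ s^2*(2*A+1)^2 := by
  have hs0 : 0 ≤ s := le_trans hx0 hxs
  rcases le_or_gt A 1 with h | h
  · nlinarith [sq_nonneg (x - A*s),
      mul_nonneg (sub_nonneg.2 hys) (by nlinarith : 0 ≤ (2*A+1)*s - y),
      mul_pos hA (by nlinarith : (0:ℝ) < 1 + A - A^2)]
  · nlinarith [mul_nonneg (sub_nonneg.2 hxs) (by nlinarith : 0 ≤ (2*A-1)*s - x),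
      mul_nonneg (sub_nonneg.2 hys) (by nlinarith : 0 ≤ (2*A+1)*s - y)]

private lemma master {q A s t : ℝ} (h0 : 0 ≤ q) (h1 : q < 1) (hA : 0 < A)
    (X Y X' Y' : ℕ → ℝ) (hX : ∀ n, |X n| ≤ s) (hY : ∀ n, |Y n| ≤ t)
    (hX' : ∀ n, |X' n| ≤ s) (hY' : ∀ n, |Y' n| ≤ t) :
    |(A+1) * ((1-q) * ∑' n, (X n * Y n) * q^n) - A * ((1-q) * ∑' n, (X' n * Y' n) * q^n)
      - ((A+1)*((1-q)*∑' n, X n * q^n) - A*((1-q)*∑' n, X' n * q^n))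
        * ((A+1)*((1-q)*∑' n, Y n * q^n) - A*((1-q)*∑' n, Y' n * q^n))|
    ≤ s * t * (2*A+1)^2 := by
  have hs0 : 0 ≤ s := le_trans (abs_nonneg _) (hX 0)
  have ht0 : 0 ≤ t := le_trans (abs_nonneg _) (hY 0)
  set P : ℝ := (1-q) * ∑' n, X n * q^n with hP
  set P' : ℝ := (1-q) * ∑' n, X' n * q^n with hP'
  set U : ℝ := (1-q) * ∑' n, Y n * q^n with hU
  set U' : ℝ := (1-q) * ∑' n, Y' n * q^n with hU'
  set W : ℝ := (1-q) * ∑' n, (X n * Y n) * q^n with hW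
  set W' : ℝ := (1-q) * ∑' n, (X' n * Y' n) * q^n with hW'
  have hPb : |P| ≤ s := Eabs h0 h1 X s hX
  have hP'b : |P'| ≤ s := Eabs h0 h1 X' s hX'
  have hUb : |U| ≤ t := Eabs h0 h1 Y t hY
  have hU'b : |U'| ≤ t := Eabs h0 h1 Y' t hY'
  have hc1 : s * |W - P * U| ≤ t * (s^2 - P^2) := coreA h0 h1 X Y s t hX hY
  have hc2 : s * |W' - P' * U'| ≤ t * (s^2 - P'^2) := coreA h0 h1 X' Y' s t hX' hY'
  clear_value P P' U U' W W'
  have hdec : (A+1) * W - A * W' - ((A+1)*P - A*P') * ((A+1)*U - A*U')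
      = (A+1)*(W - P*U) - A*(W' - P'*U') - A*(A+1)*(P-P')*(U-U') := by ring
  rcases eq_or_lt_of_le hs0 with hseq | hspos
  · have hX0 : ∀ n, X n = 0 := fun n => abs_nonpos_iff.mp (le_of_le_of_eq (hX n) hseq.symm)
    have hX'0 : ∀ n, X' n = 0 := fun n => abs_nonpos_iff.mp (le_of_le_of_eq (hX' n) hseq.symm)
    have hW0 : W = 0 := by
      rw [hW, tsum_congr (fun n => by rw [hX0 n]; ring : ∀ n, (X n * Y n) * q^n = 0),
        tsum_zero, mul_zero]
    have hW'0 : W' = 0 := by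
      rw [hW', tsum_congr (fun n => by rw [hX'0 n]; ring : ∀ n, (X' n * Y' n) * q^n = 0),
        tsum_zero, mul_zero]
    have hP0 : P = 0 := by
      rw [hP, tsum_congr (fun n => by rw [hX0 n]; ring : ∀ n, X n * q^n = 0),
        tsum_zero, mul_zero]
    have hP'0 : P' = 0 := by
      rw [hP', tsum_congr (fun n => by rw [hX'0 n]; ring : ∀ n, X' n * q^n = 0),
        tsum_zero, mul_zero]
    rw [hW0, hW'0, hP0, hP'0]
    rw [← hseq]
    simp
  · have key : s * |(A+1) * W - A * W' - ((A+1)*P - A*P') * ((A+1)*U - A*U')|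
        ≤ s * (s * t * (2*A+1)^2) := by
      have habs : |(A+1) * W - A * W' - ((A+1)*P - A*P') * ((A+1)*U - A*U')|
          ≤ (A+1)*|W - P*U| + A*|W' - P'*U'| + A*(A+1)*(|P - P'| * |U - U'|) := by
        rw [hdec]
        calc |(A+1)*(W - P*U) - A*(W' - P'*U') - A*(A+1)*(P-P')*(U-U')|
            ≤ |(A+1)*(W - P*U)| + |A*(W' - P'*U')| + |A*(A+1)*(P-P')*(U-U')| := by
              exact (abs_sub _ _).trans (add_le_add_left (abs_sub _ _) _)
        _ = (A+1)*|W - P*U| + A*|W' - P'*U'| + A*(A+1)*(|P - P'| * |U - U'|) := by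
              rw [abs_mul ((A:ℝ)+1) (W - P*U), abs_mul A (W' - P'*U'),
                abs_mul (A*(A+1)*(P-P')) (U-U'), abs_mul (A*(A+1)) (P-P'),
                abs_mul A (A+1), abs_of_pos hA,
                abs_of_pos (by linarith : (0:ℝ) < A+1)]
              ring
      have hcross : |P - P'| * |U - U'| ≤ (|P|+|P'|)*(2*t) := by
        apply mul_le_mul ((abs_sub _ _))
        · calc |U - U'| ≤ |U| + |U'| := abs_sub _ _
          _ ≤ 2*t := by linarith
        · exact abs_nonneg _
        · positivity
      have step : s * ((A+1)*|W - P*U| + A*|W' - P'*U'| + A*(A+1)*(|P - P'| * |U - U'|))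
          ≤ t * ((A+1)*(s^2-P^2) + A*(s^2-P'^2) + 2*A*(A+1)*s*(|P|+|P'|)) := by
        have hA1 : (0:ℝ) ≤ A + 1 := by linarith
        have e1 : s * ((A+1)*|W - P*U|) ≤ (A+1) * (t * (s^2-P^2)) := by
          have := mul_le_mul_of_nonneg_left hc1 hA1
          linarith [this, (by ring : s * ((A+1)*|W - P*U|) = (A+1) * (s * |W - P*U|))]
        have e2 : s * (A*|W' - P'*U'|) ≤ A * (t * (s^2-P'^2)) := by
          have := mul_le_mul_of_nonneg_left hc2 hA.le
          linarith [this, (by ring : s * (A*|W' - P'*U'|) = A * (s * |W' - P'*U'|))]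
        have e3 : s * (A*(A+1)*(|P - P'| * |U - U'|)) ≤ A*(A+1)*s*((|P|+|P'|)*(2*t)) := by
          have h4 : (0:ℝ) ≤ A*(A+1)*s := by positivity
          have := mul_le_mul_of_nonneg_left hcross h4
          linarith [this,
            (by ring : s * (A*(A+1)*(|P - P'| * |U - U'|))
              = A*(A+1)*s * (|P - P'| * |U - U'|))]
        linarith [e1, e2, e3,
          (by ring : s * ((A+1)*|W - P*U| + A*|W' - P'*U'| + A*(A+1)*(|P - P'| * |U - U'|))
            = s * ((A+1)*|W - P*U|) + s * (A*|W' - P'*U'|)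
              + s * (A*(A+1)*(|P - P'| * |U - U'|))),
          (by ring : t * ((A+1)*(s^2-P^2) + A*(s^2-P'^2) + 2*A*(A+1)*s*(|P|+|P'|))
            = (A+1) * (t * (s^2-P^2)) + A * (t * (s^2-P'^2))
              + A*(A+1)*s*((|P|+|P'|)*(2*t)))]
      have hsc : (A+1)*(s^2-|P|^2) + A*(s^2-|P'|^2) + 2*A*(A+1)*s*(|P|+|P'|)
          ≤ s^2*(2*A+1)^2 :=
        scalar_ineq A s |P| |P'| hA (abs_nonneg _) hPb (abs_nonneg _) hP'b
      have hsq : |P|^2 = P^2 := sq_abs P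
      have hsq' : |P'|^2 = P'^2 := sq_abs P'
      calc s * |(A+1) * W - A * W' - ((A+1)*P - A*P') * ((A+1)*U - A*U')|
          ≤ s * ((A+1)*|W - P*U| + A*|W' - P'*U'| + A*(A+1)*(|P - P'| * |U - U'|)) := by
            apply mul_le_mul_of_nonneg_left habs hs0
      _ ≤ t * ((A+1)*(s^2-P^2) + A*(s^2-P'^2) + 2*A*(A+1)*s*(|P|+|P'|)) := step
      _ ≤ t * (s^2*(2*A+1)^2) := by
            apply mul_le_mul_of_nonneg_left _ ht0
            rw [← hsq, ← hsq']; exact hsc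
      _ = s * (s * t * (2*A+1)^2) := by ring
    exact le_of_mul_le_mul_left key hspos

private lemma Eshift {q:ℝ} (h0 : 0 ≤ q) (h1 : q < 1) (x : ℕ → ℝ) (C c : ℝ)
    (hx : ∀ n, |x n| ≤ C) :
    (1-q) * ∑' n, (x n - c) * q^n = (1-q) * ∑' n, x n * q^n - c := by
  have hq' : (0:ℝ) < 1 - q := by linarith
  have hs := summ_of_bdd h0 h1 x C hx
  have e1 : ∀ n : ℕ, (x n - c) * q^n = x n * q^n - c * q^n := fun n => by ring
  rw [tsum_congr e1, Summable.tsum_sub hs ((geo_summ h0 h1).mul_left c), tsum_mul_left,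
    tsum_geometric_of_lt_one h0 h1]
  field_simp

private lemma Eshift2 {q:ℝ} (h0 : 0 ≤ q) (h1 : q < 1) (x y : ℕ → ℝ) (Cx Cy c d : ℝ)
    (hx : ∀ n, |x n| ≤ Cx) (hy : ∀ n, |y n| ≤ Cy) :
    (1-q) * ∑' n, ((x n - c) * (y n - d)) * q^n
      = (1-q) * ∑' n, (x n * y n) * q^n - c * ((1-q) * ∑' n, y n * q^n)
        - d * ((1-q) * ∑' n, x n * q^n) + c * d := by
  have hq' : (0:ℝ) < 1 - q := by linarith
  have hCx : 0 ≤ Cx := le_trans (abs_nonneg _) (hx 0)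
  have hsx := summ_of_bdd h0 h1 x Cx hx
  have hsy := summ_of_bdd h0 h1 y Cy hy
  have hsxy : Summable fun n => (x n * y n) * q^n :=
    summ_of_bdd h0 h1 _ (Cx*Cy) (fun n => by
      rw [abs_mul]; exact mul_le_mul (hx n) (hy n) (abs_nonneg _) hCx)
  have e1 : ∀ n : ℕ, ((x n - c) * (y n - d)) * q^n
      = ((x n * y n) * q^n - c * (y n * q^n)) - (d * (x n * q^n) - (c*d) * q^n) :=
    fun n => by ring
  rw [tsum_congr e1, Summable.tsum_sub (hsxy.sub (hsy.mul_left c))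
      ((hsx.mul_left d).sub ((geo_summ h0 h1).mul_left (c*d))),
    Summable.tsum_sub hsxy (hsy.mul_left c), Summable.tsum_sub (hsx.mul_left d)
      ((geo_summ h0 h1).mul_left (c*d)),
    tsum_mul_left, tsum_mul_left, tsum_mul_left, tsum_geometric_of_lt_one h0 h1]
  field_simp
  ring

set_option maxHeartbeats 1000000 in
/-- q-Grüss-type inequality for `I_q(·;a,b)` with the extra factor
`1 + 4ab/(b−a)²`. -/
theorem q_gruss_Iqab (q a b m M φ Φ : ℝ) (f g : ℝ → ℝ)
    (hq0 : 0 < q) (hq1 : q < 1) (ha : 0 < a) (hab : a < b)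
    (hf : ∀ x ∈ Icc (0:ℝ) b, m ≤ f x ∧ f x ≤ M)
    (hg : ∀ x ∈ Icc (0:ℝ) b, φ ≤ g x ∧ g x ≤ Φ) :
    |(1 / (b - a)) *
          ((b * (1 - q) * ∑' n : ℕ, f (b * q ^ n) * g (b * q ^ n) * q ^ n) -
            (a * (1 - q) * ∑' n : ℕ, f (a * q ^ n) * g (a * q ^ n) * q ^ n)) -
        (1 / (b - a) ^ 2) *
          ((b * (1 - q) * ∑' n : ℕ, f (b * q ^ n) * q ^ n) -
            (a * (1 - q) * ∑' n : ℕ, f (a * q ^ n) * q ^ n)) *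
          ((b * (1 - q) * ∑' n : ℕ, g (b * q ^ n) * q ^ n) -
            (a * (1 - q) * ∑' n : ℕ, g (a * q ^ n) * q ^ n))| ≤
      (1 / 4) * (M - m) * (Φ - φ) * (1 + 4 * a * b / (b - a) ^ 2) := by
  have h0 : (0:ℝ) ≤ q := hq0.le
  have hb0 : 0 < b := lt_trans ha hab
  have hba : 0 < b - a := by linarith
  have hbane : b - a ≠ 0 := ne_of_gt hba
  -- membership of the q-lattice points
  have hmem : ∀ c0 : ℝ, 0 < c0 → c0 ≤ b → ∀ n : ℕ, c0 * q ^ n ∈ Icc (0:ℝ) b := by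
    intro c0 hc0 hc0b n
    constructor
    · positivity
    · calc c0 * q ^ n ≤ c0 * 1 := by
            apply mul_le_mul_of_nonneg_left (pow_le_one₀ h0 hq1.le) hc0.le
      _ = c0 := mul_one c0
      _ ≤ b := hc0b
  set c : ℝ := (m + M) / 2 with hc
  set d : ℝ := (φ + Φ) / 2 with hd
  set s : ℝ := (M - m) / 2 with hs
  set t : ℝ := (Φ - φ) / 2 with ht
  set A : ℝ := a / (b - a) with hA
  have hApos : 0 < A := div_pos ha hba
  have hA1 : A + 1 = b / (b - a) := by rw [hA]; field_simp; ring
  -- bounds for the shifted sequences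
  have hXb : ∀ n : ℕ, |f (b * q ^ n) - c| ≤ s := by
    intro n
    obtain ⟨h1', h2'⟩ := hf _ (hmem b hb0 le_rfl n)
    rw [abs_le, hc, hs]
    constructor <;> linarith
  have hYb : ∀ n : ℕ, |g (b * q ^ n) - d| ≤ t := by
    intro n
    obtain ⟨h1', h2'⟩ := hg _ (hmem b hb0 le_rfl n)
    rw [abs_le, hd, ht]
    constructor <;> linarith
  have hXa : ∀ n : ℕ, |f (a * q ^ n) - c| ≤ s := by
    intro n
    obtain ⟨h1', h2'⟩ := hf _ (hmem a ha hab.le n)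
    rw [abs_le, hc, hs]
    constructor <;> linarith
  have hYa : ∀ n : ℕ, |g (a * q ^ n) - d| ≤ t := by
    intro n
    obtain ⟨h1', h2'⟩ := hg _ (hmem a ha hab.le n)
    rw [abs_le, hd, ht]
    constructor <;> linarith
  -- bounds for the raw sequences
  have hfb : ∀ n : ℕ, |f (b * q ^ n)| ≤ |m| + |M| := by
    intro n
    obtain ⟨h1', h2'⟩ := hf _ (hmem b hb0 le_rfl n)
    rw [abs_le]
    constructor <;> nlinarith [neg_abs_le m, le_abs_self M, abs_nonneg m, abs_nonneg M]
  have hfa : ∀ n : ℕ, |f (a * q ^ n)| ≤ |m| + |M| := by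
    intro n
    obtain ⟨h1', h2'⟩ := hf _ (hmem a ha hab.le n)
    rw [abs_le]
    constructor <;> nlinarith [neg_abs_le m, le_abs_self M, abs_nonneg m, abs_nonneg M]
  have hgb : ∀ n : ℕ, |g (b * q ^ n)| ≤ |φ| + |Φ| := by
    intro n
    obtain ⟨h1', h2'⟩ := hg _ (hmem b hb0 le_rfl n)
    rw [abs_le]
    constructor <;> nlinarith [neg_abs_le φ, le_abs_self Φ, abs_nonneg φ, abs_nonneg Φ]
  have hga : ∀ n : ℕ, |g (a * q ^ n)| ≤ |φ| + |Φ| := by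
    intro n
    obtain ⟨h1', h2'⟩ := hg _ (hmem a ha hab.le n)
    rw [abs_le]
    constructor <;> nlinarith [neg_abs_le φ, le_abs_self Φ, abs_nonneg φ, abs_nonneg Φ]
  -- master inequality for the shifted sequences
  have hmaster :
      |(A+1) * ((1-q) * ∑' n : ℕ, ((f (b*q^n) - c) * (g (b*q^n) - d)) * q^n)
        - A * ((1-q) * ∑' n : ℕ, ((f (a*q^n) - c) * (g (a*q^n) - d)) * q^n)
        - ((A+1)*((1-q)*∑' n : ℕ, (f (b*q^n) - c) * q^n)
            - A*((1-q)*∑' n : ℕ, (f (a*q^n) - c) * q^n))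
          * ((A+1)*((1-q)*∑' n : ℕ, (g (b*q^n) - d) * q^n)
            - A*((1-q)*∑' n : ℕ, (g (a*q^n) - d) * q^n))|
      ≤ s * t * (2*A+1)^2 :=
    master h0 hq1 hApos (fun n => f (b*q^n) - c) (fun n => g (b*q^n) - d)
      (fun n => f (a*q^n) - c) (fun n => g (a*q^n) - d) hXb hYb hXa hYa
  -- rewrite the shifted sums in terms of the original ones
  have E2b : (1-q) * ∑' n : ℕ, ((f (b*q^n) - c) * (g (b*q^n) - d)) * q^n
      = (1-q) * ∑' n : ℕ, (f (b*q^n) * g (b*q^n)) * q^n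
        - c * ((1-q) * ∑' n : ℕ, g (b*q^n) * q^n)
        - d * ((1-q) * ∑' n : ℕ, f (b*q^n) * q^n) + c * d :=
    Eshift2 h0 hq1 (fun n => f (b*q^n)) (fun n => g (b*q^n)) _ _ c d hfb hgb
  have E2a : (1-q) * ∑' n : ℕ, ((f (a*q^n) - c) * (g (a*q^n) - d)) * q^n
      = (1-q) * ∑' n : ℕ, (f (a*q^n) * g (a*q^n)) * q^n
        - c * ((1-q) * ∑' n : ℕ, g (a*q^n) * q^n)
        - d * ((1-q) * ∑' n : ℕ, f (a*q^n) * q^n) + c * d :=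
    Eshift2 h0 hq1 (fun n => f (a*q^n)) (fun n => g (a*q^n)) _ _ c d hfa hga
  have E1fb : (1-q) * ∑' n : ℕ, (f (b*q^n) - c) * q^n
      = (1-q) * ∑' n : ℕ, f (b*q^n) * q^n - c :=
    Eshift h0 hq1 (fun n => f (b*q^n)) _ c hfb
  have E1fa : (1-q) * ∑' n : ℕ, (f (a*q^n) - c) * q^n
      = (1-q) * ∑' n : ℕ, f (a*q^n) * q^n - c :=
    Eshift h0 hq1 (fun n => f (a*q^n)) _ c hfa
  have E1gb : (1-q) * ∑' n : ℕ, (g (b*q^n) - d) * q^n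
      = (1-q) * ∑' n : ℕ, g (b*q^n) * q^n - d :=
    Eshift h0 hq1 (fun n => g (b*q^n)) _ d hgb
  have E1ga : (1-q) * ∑' n : ℕ, (g (a*q^n) - d) * q^n
      = (1-q) * ∑' n : ℕ, g (a*q^n) * q^n - d :=
    Eshift h0 hq1 (fun n => g (a*q^n)) _ d hga
  rw [E2b, E2a, E1fb, E1fa, E1gb, E1ga] at hmaster
  -- name the six raw sums
  set Sfgb : ℝ := ∑' n : ℕ, f (b*q^n) * g (b*q^n) * q^n with hSfgb
  set Sfga : ℝ := ∑' n : ℕ, f (a*q^n) * g (a*q^n) * q^n with hSfga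
  set Sfb : ℝ := ∑' n : ℕ, f (b*q^n) * q^n with hSfb
  set Sfa : ℝ := ∑' n : ℕ, f (a*q^n) * q^n with hSfa
  set Sgb : ℝ := ∑' n : ℕ, g (b*q^n) * q^n with hSgb
  set Sga : ℝ := ∑' n : ℕ, g (a*q^n) * q^n with hSga
  clear_value Sfgb Sfga Sfb Sfa Sgb Sga c d s t A
  have hRHS : (1 / 4) * (M - m) * (Φ - φ) * (1 + 4 * a * b / (b - a) ^ 2)
      = s * t * (2*A+1)^2 := by
    rw [hs, ht, hA]
    field_simp
    ring
  rw [hRHS]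
  have hLHS : (1 / (b - a)) * ((b * (1 - q) * Sfgb) - (a * (1 - q) * Sfga))
        - (1 / (b - a) ^ 2) * ((b * (1 - q) * Sfb) - (a * (1 - q) * Sfa))
          * ((b * (1 - q) * Sgb) - (a * (1 - q) * Sga))
      = (A+1) * ((1-q) * Sfgb - c * ((1-q) * Sgb) - d * ((1-q) * Sfb) + c * d)
        - A * ((1-q) * Sfga - c * ((1-q) * Sga) - d * ((1-q) * Sfa) + c * d)
        - ((A+1)*((1-q)*Sfb - c) - A*((1-q)*Sfa - c))
          * ((A+1)*((1-q)*Sgb - d) - A*((1-q)*Sga - d)) := by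
    rw [hA]
    field_simp
    ring
  rw [hLHS]
  exact hmaster
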